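/- Suppose (z, w) satisfies (C1')–(C3') and z_{u,t} > 0 for some u ∈ S_i and t, for a fixed arm i. Then there exist a strategy dag D for arm i with values prob(u,t) and nonnegative (z', w') with z'_{u,t} ≤ z_{u,t} for all u, t, such that: (z', w') satisfies (C1')–(C3'); z_{u,t} − z'_{u,t} = prob(u,t) for every u ∈ S_i and t ∈ {1,…,B}, while z' = z and w' = w on the states of all other arms; and z'_{u,t} = 0 < z_{u,t} for at least one pair (u,t) with u ∈ S_i. -/
import Mathlib


open Finset
open scoped Classical

/-- A strategy dag for arm `i` (see statement 9's context). -/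
def IsStrategyDag {S : Type*} [Fintype S] {n : ℕ} (B : ℕ) (arm : S → Fin n)
    (ρ : Fin n → S) (p : S → S → ℝ) (i : Fin n)
    (prob : S → WithTop ℕ → ℝ) (R : S → WithTop ℕ → S → WithTop ℕ → Prop) : Prop :=
  (∀ u t, arm u = i → 0 ≤ prob u t) ∧
  (∀ u, arm u = i → prob u ⊤ = 0) ∧
  (∀ v u, arm v = i → 0 < p v u → ∀ t ∈ Finset.Icc 1 B,
    ∃! t' : WithTop ℕ, R v (t : WithTop ℕ) u t' ∧ (t : WithTop ℕ) + 1 ≤ t') ∧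
  (∀ u, arm u = i → u ≠ ρ i → ∀ t ∈ Finset.Icc 1 B,
    prob u (t : WithTop ℕ) = ∑ v : S, ∑ t' ∈ Finset.Icc 1 B,
      if R v (t' : WithTop ℕ) u (t : WithTop ℕ)
        then prob v (t' : WithTop ℕ) * p v u else 0)

/-- One peeling step of the convex-decomposition procedure in
the layered-DAG case: if `z` is positive somewhere on arm `i`, one can peel off
a strategy dag for arm `i` from `(z, w)`, leaving a residual solution
`(z', w')` that is nonnegative, dominated by `z`, satisfies (C1')–(C3'),
differs from `(z, w)` only on arm `i`, and has a new zero coordinate. -/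
theorem stmt_10 {S : Type*} [Fintype S] [DecidableEq S] {n : ℕ}
    (B : ℕ)
    (arm : S → Fin n) (ρ : Fin n → S) (layer : S → ℕ) (p : S → S → ℝ)
    (hρ : ∀ i, arm (ρ i) = i)
    (hρlayer : ∀ i, layer (ρ i) = 0)
    (hp : ∀ v u, 0 ≤ p v u ∧ p v u ≤ 1)
    (hpsum : ∀ v, ∑ u : S, p v u ≤ 1)
    (harc : ∀ v u, 0 < p v u → arm u = arm v ∧ layer u = layer v + 1)
    (hsource : ∀ u, u ≠ ρ (arm u) → ∃ v, 0 < p v u)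
    (z w : S → ℕ → ℝ)
    (hznn : ∀ u t, 0 ≤ z u t) (hwnn : ∀ u t, 0 ≤ w u t)
    (hC1 : ∀ u : S, u ≠ ρ (arm u) →
      w u 1 = 0 ∧ ∀ t ∈ Icc 2 B, w u t = ∑ v : S, z v (t - 1) * p v u)
    (hC2 : ∀ u : S, ∀ t ∈ Icc 1 B, ∑ t' ∈ Icc 1 t, z u t' ≤ ∑ t' ∈ Icc 1 t, w u t')
    (hC3 : ∀ t ∈ Icc 1 B, ∑ u : S, z u t ≤ 1)
    (i : Fin n)
    (hpos : ∃ u : S, ∃ t : ℕ, arm u = i ∧ t ∈ Icc 1 B ∧ 0 < z u t) :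
    ∃ (prob : S → WithTop ℕ → ℝ) (R : S → WithTop ℕ → S → WithTop ℕ → Prop)
      (z' w' : S → ℕ → ℝ),
      IsStrategyDag B arm ρ p i prob R ∧
      (∀ u t, 0 ≤ z' u t) ∧ (∀ u t, 0 ≤ w' u t) ∧
      (∀ u t, z' u t ≤ z u t) ∧
      (∀ u : S, u ≠ ρ (arm u) →
        w' u 1 = 0 ∧ ∀ t ∈ Icc 2 B, w' u t = ∑ v : S, z' v (t - 1) * p v u) ∧
      (∀ u : S, ∀ t ∈ Icc 1 B, ∑ t' ∈ Icc 1 t, z' u t' ≤ ∑ t' ∈ Icc 1 t, w' u t') ∧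
      (∀ t ∈ Icc 1 B, ∑ u : S, z' u t ≤ 1) ∧
      (∀ u, arm u = i → ∀ t ∈ Icc 1 B, z u t - z' u t = prob u (t : WithTop ℕ)) ∧
      (∀ u t, arm u ≠ i → z' u t = z u t ∧ w' u t = w u t) ∧
      (∃ u : S, ∃ t : ℕ, arm u = i ∧ z' u t = 0 ∧ 0 < z u t) := by
  classical
  -- layer-0 states are sources
  have hlay0 : ∀ u : S, layer u = 0 → u = ρ (arm u) := by
    intro u h
    by_contra hne
    obtain ⟨v, hv⟩ := hsource u hne
    have := (harc v u hv).2
    omega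
  have hlaypos : ∀ u : S, u ≠ ρ (arm u) → layer u ≠ 0 := by
    intro u h h0
    exact h (hlay0 u h0)
  -- positive z on arm i propagates back to the source
  have hsrc : ∃ t0 ∈ Icc 1 B, 0 < z (ρ i) t0 := by
    obtain ⟨u₀, t₀, ha₀, ht₀, hz₀⟩ := hpos
    have main : ∀ L : ℕ, ∀ u : S, ∀ t : ℕ, layer u ≤ L → arm u = i → t ∈ Icc 1 B →
        0 < z u t → ∃ t0 ∈ Icc 1 B, 0 < z (ρ i) t0 := by
      intro L
      induction L with
      | zero =>
        intro u t hL ha ht hz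
        have hu : u = ρ (arm u) := hlay0 u (Nat.le_zero.mp hL)
        rw [ha] at hu
        exact ⟨t, ht, hu ▸ hz⟩
      | succ L ih =>
        intro u t hL ha ht hz
        by_cases hu : u = ρ (arm u)
        · rw [ha] at hu
          exact ⟨t, ht, hu ▸ hz⟩
        · have ht1 := (mem_Icc.mp ht).1
          have htB := (mem_Icc.mp ht).2
          have h2 := hC2 u t ht
          have hzsum : 0 < ∑ t' ∈ Icc 1 t, z u t' := by
            have hle : z u t ≤ ∑ t' ∈ Icc 1 t, z u t' :=
              Finset.single_le_sum (fun s _ => hznn u s) (mem_Icc.mpr ⟨ht1, le_refl t⟩)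
            linarith
          have hwsum : 0 < ∑ t' ∈ Icc 1 t, w u t' := lt_of_lt_of_le hzsum h2
          obtain ⟨t', ht', hwpos⟩ : ∃ t' ∈ Icc 1 t, 0 < w u t' := by
            by_contra hcon
            push_neg at hcon
            have hz0 : ∑ t' ∈ Icc 1 t, w u t' = 0 :=
              Finset.sum_eq_zero (fun s hs => le_antisymm (hcon s hs) (hwnn u s))
            rw [hz0] at hwsum
            exact lt_irrefl 0 hwsum
          have hne1 : t' ≠ 1 := by
            intro h1
            rw [h1, (hC1 u hu).1] at hwpos
            exact lt_irrefl 0 hwpos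
          have ht'2 : t' ∈ Icc 2 B := by
            have h := mem_Icc.mp ht'
            rw [mem_Icc]
            omega
          have hw := (hC1 u hu).2 t' ht'2
          rw [hw] at hwpos
          obtain ⟨v, -, hvpos⟩ : ∃ v ∈ (univ : Finset S), 0 < z v (t'-1) * p v u := by
            by_contra hcon
            push_neg at hcon
            have hz0 : ∑ v : S, z v (t'-1) * p v u = 0 :=
              Finset.sum_eq_zero (fun v hv => le_antisymm (hcon v hv)
                (mul_nonneg (hznn _ _) (hp v u).1))
            rw [hz0] at hwpos
            exact lt_irrefl 0 hwpos
          have hpv : 0 < p v u := by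
            rcases lt_or_eq_of_le (hp v u).1 with h | h
            · exact h
            · rw [← h, mul_zero] at hvpos
              exact absurd hvpos (lt_irrefl 0)
          have hzv : 0 < z v (t'-1) := by
            by_contra hc
            push_neg at hc
            have h0 : z v (t'-1) = 0 := le_antisymm hc (hznn _ _)
            rw [h0, zero_mul] at hvpos
            exact lt_irrefl 0 hvpos
          have harmv : arm v = i := ((harc v u hpv).1).symm.trans ha
          have hlayv : layer v ≤ L := by
            have := (harc v u hpv).2
            omega
          have ht'm : t' - 1 ∈ Icc 1 B := by
            have h := mem_Icc.mp ht'2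
            rw [mem_Icc]
            omega
          exact ih v (t'-1) hlayv harmv ht'm hzv
    exact main (layer u₀) u₀ t₀ le_rfl ha₀ ht₀ hz₀
  obtain ⟨t0, ht0, hz0⟩ := hsrc
  -- the routing time function
  set σf : ℕ → S → WithTop ℕ :=
    fun s u => ((Icc (s+1) B).filter (fun r => 0 < z u r)).min with hσfdef
  have hσ_mem : ∀ (s : ℕ) (u : S) (m : ℕ), σf s u = (m : WithTop ℕ) →
      (s + 1 ≤ m ∧ m ≤ B) ∧ 0 < z u m := by
    intro s u m h
    have hm := Finset.mem_of_min h
    rw [Finset.mem_filter, mem_Icc] at hm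
    exact hm
  have hσ_le : ∀ (s : ℕ) (u : S) (r : ℕ), s + 1 ≤ r → r ≤ B → 0 < z u r →
      σf s u ≤ (r : WithTop ℕ) := by
    intro s u r h1 h2 h3
    exact Finset.min_le (by rw [Finset.mem_filter, mem_Icc]; exact ⟨⟨h1, h2⟩, h3⟩)
  -- the flow coefficients, defined by recursion on the layer
  set g : ℕ → S → ℕ → ℝ := fun L =>
    Nat.rec (motive := fun _ => S → ℕ → ℝ) (fun _ _ => 0)
      (fun _ ih u t => if layer u = 0 then (if u = ρ i ∧ t = t0 then (1:ℝ) else 0)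
        else ∑ v : S, ∑ s ∈ Icc 1 B,
          if σf s u = (t : WithTop ℕ) then ih v s * p v u else 0) L with hgdef
  have hgzero : ∀ (u : S) (t : ℕ), g 0 u t = 0 := fun _ _ => rfl
  have hgsucc : ∀ (L : ℕ) (u : S) (t : ℕ), g (L+1) u t =
      if layer u = 0 then (if u = ρ i ∧ t = t0 then (1:ℝ) else 0)
      else ∑ v : S, ∑ s ∈ Icc 1 B,
        if σf s u = (t : WithTop ℕ) then g L v s * p v u else 0 := fun _ _ _ => rfl
  have hgnn : ∀ (L : ℕ) (u : S) (t : ℕ), 0 ≤ g L u t := by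
    intro L
    induction L with
    | zero => intro u t; rw [hgzero]
    | succ L ih =>
      intro u t
      rw [hgsucc]
      split
      · split
        · exact zero_le_one
        · exact le_rfl
      · refine Finset.sum_nonneg fun v _ => Finset.sum_nonneg fun s _ => ?_
        split
        · exact mul_nonneg (ih v s) (hp v _).1
        · exact le_rfl
  have hgsupp : ∀ (L : ℕ) (u : S) (t : ℕ), g L u t ≠ 0 →
      arm u = i ∧ t ∈ Icc 1 B ∧ 0 < z u t := by
    intro L
    induction L with
    | zero => intro u t h; exact absurd (hgzero u t) h
    | succ L ih =>
      intro u t h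
      rw [hgsucc] at h
      by_cases h0 : layer u = 0
      · rw [if_pos h0] at h
        have hb : u = ρ i ∧ t = t0 := by
          by_contra hc
          rw [if_neg hc] at h
          exact h rfl
        obtain ⟨h1, h2⟩ := hb
        subst h1; subst h2
        exact ⟨hρ i, ht0, hz0⟩
      · rw [if_neg h0] at h
        obtain ⟨v, -, hv⟩ := Finset.exists_ne_zero_of_sum_ne_zero h
        obtain ⟨s, hsmem, hs⟩ := Finset.exists_ne_zero_of_sum_ne_zero hv
        have hσc : σf s u = (t : WithTop ℕ) := by
          by_contra hc
          rw [if_neg hc] at hs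
          exact hs rfl
        rw [if_pos hσc] at hs
        have hpvu : p v u ≠ 0 := fun hc => hs (by rw [hc, mul_zero])
        have hgvs : g L v s ≠ 0 := fun hc => hs (by rw [hc, zero_mul])
        have hpv : 0 < p v u := lt_of_le_of_ne (hp v u).1 (Ne.symm hpvu)
        have harmv := (ih v s hgvs).1
        have hmem := hσ_mem s u t hσc
        refine ⟨((harc v u hpv).1).trans harmv, ?_, hmem.2⟩
        rw [mem_Icc]
        omega
  have hmono : ∀ (L : ℕ) (u : S) (t : ℕ), layer u < L → g (L+1) u t = g L u t := by
    intro L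
    induction L with
    | zero => intro u t h; exact absurd h (Nat.not_lt_zero _)
    | succ L ih =>
      intro u t h
      rw [hgsucc (L+1) u t, hgsucc L u t]
      by_cases h0 : layer u = 0
      · rw [if_pos h0, if_pos h0]
      · rw [if_neg h0, if_neg h0]
        refine Finset.sum_congr rfl fun v _ => Finset.sum_congr rfl fun s _ => ?_
        by_cases hσc : σf s u = (t : WithTop ℕ)
        · rw [if_pos hσc, if_pos hσc]
          by_cases hpvu : p v u = 0
          · rw [hpvu, mul_zero, mul_zero]
          · have hpv : 0 < p v u := lt_of_le_of_ne (hp v u).1 (Ne.symm hpvu)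
            have hl : layer v < L := by
              have := (harc v u hpv).2
              omega
            rw [ih v s hl]
        · rw [if_neg hσc, if_neg hσc]
  set c : S → ℕ → ℝ := fun u t => g (layer u + 1) u t with hcdef
  have hstab : ∀ (L : ℕ) (u : S) (t : ℕ), layer u < L → g L u t = c u t := by
    intro L
    induction L with
    | zero => intro u t h; exact absurd h (Nat.not_lt_zero _)
    | succ L ih =>
      intro u t h
      by_cases hL : layer u < L
      · rw [hmono L u t hL]
        exact ih u t hL
      · have hLe : L = layer u := by omega
        subst hLe
        rfl
  have hcnn : ∀ (u : S) (t : ℕ), 0 ≤ c u t := fun u t => hgnn (layer u + 1) u t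
  have hcsupp : ∀ (u : S) (t : ℕ), c u t ≠ 0 → arm u = i ∧ t ∈ Icc 1 B ∧ 0 < z u t :=
    fun u t h => hgsupp (layer u + 1) u t h
  have hrec : ∀ (u : S) (t : ℕ), layer u ≠ 0 →
      c u t = ∑ v : S, ∑ s ∈ Icc 1 B,
        if σf s u = (t : WithTop ℕ) then c v s * p v u else 0 := by
    intro u t h0
    have h1 : c u t = g (layer u + 1) u t := rfl
    rw [h1, hgsucc, if_neg h0]
    refine Finset.sum_congr rfl fun v _ => Finset.sum_congr rfl fun s _ => ?_
    by_cases hσc : σf s u = (t : WithTop ℕ)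
    · rw [if_pos hσc, if_pos hσc]
      by_cases hpvu : p v u = 0
      · rw [hpvu, mul_zero, mul_zero]
      · have hpv : 0 < p v u := lt_of_le_of_ne (hp v u).1 (Ne.symm hpvu)
        have hl : layer v < layer u := by
          have := (harc v u hpv).2
          omega
        rw [hstab (layer u) v s hl]
    · rw [if_neg hσc, if_neg hσc]
  have hcρ : c (ρ i) t0 = 1 := by
    have h0 : layer (ρ i) = 0 := hρlayer i
    have h1 : c (ρ i) t0 = g (layer (ρ i) + 1) (ρ i) t0 := rfl
    rw [h1, hgsucc, if_pos h0, if_pos ⟨rfl, rfl⟩]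
  have hc0 : ∀ u : S, c u 0 = 0 := by
    intro u
    by_contra h
    have := (hcsupp u 0 h).2.1
    rw [mem_Icc] at this
    omega
  have hcarm : ∀ (u : S) (t : ℕ), arm u ≠ i → c u t = 0 := by
    intro u t ha
    by_contra h
    exact ha (hcsupp u t h).1
  have hcIcc : ∀ (u : S) (t : ℕ), t ∉ Icc 1 B → c u t = 0 := by
    intro u t ht
    by_contra h
    exact ht (hcsupp u t h).2.1
  -- the scaling factor ε
  set F : Finset (S × ℕ) := (Finset.univ ×ˢ Icc 1 B).filter (fun q => 0 < c q.1 q.2)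
    with hFdef
  have hFmem : ∀ q : S × ℕ, q ∈ F ↔ (q.2 ∈ Icc 1 B ∧ 0 < c q.1 q.2) := by
    intro q
    rw [hFdef, Finset.mem_filter, Finset.mem_product]
    simp only [Finset.mem_univ, true_and]
  have hFne : F.Nonempty := ⟨(ρ i, t0), by
    rw [hFmem]
    exact ⟨ht0, by rw [hcρ]; exact one_pos⟩⟩
  set G : Finset ℝ := F.image (fun q => z q.1 q.2 / c q.1 q.2) with hGdef
  have hGne : G.Nonempty := hFne.image _
  set ε : ℝ := G.min' hGne with hεdef
  have hεpos : 0 < ε := by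
    rw [hεdef, Finset.lt_min'_iff]
    intro x hx
    rw [hGdef, Finset.mem_image] at hx
    obtain ⟨q, hq, rfl⟩ := hx
    rw [hFmem] at hq
    have hc := hq.2
    have hzq := (hcsupp q.1 q.2 (ne_of_gt hc)).2.2
    exact div_pos hzq hc
  have hεle : ∀ (u : S) (t : ℕ), ε * c u t ≤ z u t := by
    intro u t
    rcases eq_or_lt_of_le (hcnn u t) with h | h
    · rw [← h, mul_zero]
      exact hznn u t
    · have htmem := (hcsupp u t (ne_of_gt h)).2.1
      have hqF : (u, t) ∈ F := by rw [hFmem]; exact ⟨htmem, h⟩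
      have hεle' : ε ≤ z u t / c u t :=
        Finset.min'_le _ _ (by rw [hGdef]; exact Finset.mem_image_of_mem _ hqF)
      calc ε * c u t ≤ (z u t / c u t) * c u t :=
            mul_le_mul_of_nonneg_right hεle' (le_of_lt h)
        _ = z u t := div_mul_cancel₀ _ (ne_of_gt h)
  -- the residual solution and the strategy dag
  set z' : S → ℕ → ℝ := fun u t => z u t - ε * c u t with hz'def
  set w' : S → ℕ → ℝ := fun u t =>
    if arm u = i ∧ u ≠ ρ i then
      (if 2 ≤ t ∧ t ≤ B then ∑ v : S, z' v (t-1) * p v u else if t = 1 then 0 else w u t)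
    else w u t with hw'def
  set prob : S → WithTop ℕ → ℝ :=
    fun u T => WithTop.recTopCoe 0 (fun t => ε * c u t) T with hprobdef
  set R : S → WithTop ℕ → S → WithTop ℕ → Prop :=
    fun v s u t' => ∃ sN : ℕ, s = (sN : WithTop ℕ) ∧ t' = σf sN u with hRdef
  have hprobcoe : ∀ (u : S) (t : ℕ), prob u (t : WithTop ℕ) = ε * c u t := fun _ _ => rfl
  have hz'eq : ∀ (u : S) (t : ℕ), z' u t = z u t - ε * c u t := fun _ _ => rfl
  have hz'nn : ∀ (u : S) (t : ℕ), 0 ≤ z' u t := by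
    intro u t
    rw [hz'eq]
    linarith [hεle u t]
  have hz'le : ∀ (u : S) (t : ℕ), z' u t ≤ z u t := by
    intro u t
    rw [hz'eq]
    have := mul_nonneg hεpos.le (hcnn u t)
    linarith
  have hz'other : ∀ (u : S) (t : ℕ), arm u ≠ i → z' u t = z u t := by
    intro u t ha
    rw [hz'eq, hcarm u t ha, mul_zero, sub_zero]
  have hw'eq : ∀ (u : S) (t : ℕ), w' u t =
      if arm u = i ∧ u ≠ ρ i then
        (if 2 ≤ t ∧ t ≤ B then ∑ v : S, z' v (t-1) * p v u else if t = 1 then 0 else w u t)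
      else w u t := fun _ _ => rfl
  have hw'other : ∀ (u : S) (t : ℕ), arm u ≠ i → w' u t = w u t := by
    intro u t ha
    rw [hw'eq, if_neg (fun h => ha h.1)]
  have hw'nn : ∀ (u : S) (t : ℕ), 0 ≤ w' u t := by
    intro u t
    rw [hw'eq]
    split
    · split
      · exact Finset.sum_nonneg fun v _ => mul_nonneg (hz'nn v _) (hp v u).1
      · split
        · exact le_rfl
        · exact hwnn u t
    · exact hwnn u t
  -- (C1') for the residual solution
  have hC1' : ∀ u : S, u ≠ ρ (arm u) →
      w' u 1 = 0 ∧ ∀ t ∈ Icc 2 B, w' u t = ∑ v : S, z' v (t - 1) * p v u := by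
    intro u hu
    by_cases ha : arm u = i
    · have hne : u ≠ ρ i := by rw [ha] at hu; exact hu
      constructor
      · rw [hw'eq, if_pos ⟨ha, hne⟩, if_neg (by omega), if_pos rfl]
      · intro t htm
        have h2 := mem_Icc.mp htm
        rw [hw'eq, if_pos ⟨ha, hne⟩, if_pos h2]
    · constructor
      · rw [hw'other u 1 ha]
        exact (hC1 u hu).1
      · intro t htm
        rw [hw'other u t ha, (hC1 u hu).2 t htm]
        refine Finset.sum_congr rfl fun v _ => ?_
        by_cases hpvu : p v u = 0
        · rw [hpvu, mul_zero, mul_zero]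
        · have hpv : 0 < p v u := lt_of_le_of_ne (hp v u).1 (Ne.symm hpvu)
          have harmv : arm v ≠ i := by
            rw [← (harc v u hpv).1]
            exact ha
          rw [hz'other v (t-1) harmv]
  -- (C2') for the residual solution: the main estimate
  have hC2' : ∀ u : S, ∀ t ∈ Icc 1 B, ∑ t' ∈ Icc 1 t, z' u t' ≤ ∑ t' ∈ Icc 1 t, w' u t' := by
    intro u t htm
    by_cases ha : arm u = i
    · by_cases hne : u = ρ i
      · -- source: w' = w and z' ≤ z
        have hwu : ∀ s, w' u s = w u s := by
          intro s
          rw [hw'eq, if_neg (fun h => h.2 hne)]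
        calc ∑ t' ∈ Icc 1 t, z' u t' ≤ ∑ t' ∈ Icc 1 t, z u t' :=
              Finset.sum_le_sum fun s _ => hz'le u s
          _ ≤ ∑ t' ∈ Icc 1 t, w u t' := hC2 u t htm
          _ = ∑ t' ∈ Icc 1 t, w' u t' := by
              exact (Finset.sum_congr rfl fun s _ => (hwu s).symm)
      · -- main case
        have hu : u ≠ ρ (arm u) := by rw [ha]; exact hne
        have hlay : layer u ≠ 0 := hlaypos u hu
        have ht1 : 1 ≤ t := (mem_Icc.mp htm).1
        have htB : t ≤ B := (mem_Icc.mp htm).2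
        -- rewrite both sides
        have hzsum : ∑ t' ∈ Icc 1 t, z' u t' =
            ∑ t' ∈ Icc 1 t, z u t' - ε * ∑ t' ∈ Icc 1 t, c u t' := by
          rw [Finset.mul_sum, ← Finset.sum_sub_distrib]
        have hwsum : ∑ t' ∈ Icc 1 t, w' u t' =
            ∑ t' ∈ Icc 1 t, w u t' - ε * ∑ t' ∈ Icc 1 t, (∑ v : S, c v (t'-1) * p v u) := by
          rw [Finset.mul_sum, ← Finset.sum_sub_distrib]
          refine Finset.sum_congr rfl fun s hs => ?_
          have hs1 := (mem_Icc.mp hs).1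
          have hst := (mem_Icc.mp hs).2
          by_cases hs1' : s = 1
          · subst hs1'
            rw [hw'eq, if_pos ⟨ha, hne⟩, if_neg (by omega), if_pos rfl, (hC1 u hu).1]
            have hdd : ∑ v : S, c v (1-1) * p v u = 0 :=
              Finset.sum_eq_zero fun v _ => by rw [Nat.sub_self, hc0 v, zero_mul]
            rw [hdd, mul_zero, sub_zero]
          · have hs2 : 2 ≤ s ∧ s ≤ B := by omega
            rw [hw'eq, if_pos ⟨ha, hne⟩, if_pos hs2, (hC1 u hu).2 s (mem_Icc.mpr hs2)]
            rw [Finset.mul_sum, ← Finset.sum_sub_distrib]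
            refine Finset.sum_congr rfl fun v _ => ?_
            rw [hz'eq]
            ring
        rw [hzsum, hwsum]
        -- key inequality
        have key : ε * (∑ t' ∈ Icc 1 t, (∑ v : S, c v (t'-1) * p v u))
            - ε * (∑ t' ∈ Icc 1 t, c u t')
            ≤ ∑ t' ∈ Icc 1 t, w u t' - ∑ t' ∈ Icc 1 t, z u t' := by
          -- cumulative departures
          have hDd : ∑ t' ∈ Icc 1 t, (∑ v : S, c v (t'-1) * p v u) =
              ∑ v : S, ∑ s ∈ Icc 1 B, (if s + 1 ≤ t then c v s * p v u else 0) := by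
            rw [Finset.sum_comm]
            refine Finset.sum_congr rfl fun v _ => ?_
            have haux : ∀ T : ℕ, ∑ s ∈ Icc 1 (T+1), c v (s-1) * p v u =
                ∑ s ∈ Icc 1 T, c v s * p v u := by
              intro T
              induction T with
              | zero => simp [hc0 v]
              | succ T ih =>
                rw [Finset.sum_Icc_succ_top (by omega : 1 ≤ T + 1 + 1), ih,
                  Finset.sum_Icc_succ_top (by omega : 1 ≤ T + 1)]
                norm_num
            have haux2 : ∑ s ∈ Icc 1 t, c v (s-1) * p v u =
                ∑ s ∈ Icc 1 (t-1), c v s * p v u := by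
              obtain ⟨T, hT⟩ : ∃ T, t = T + 1 := ⟨t - 1, by omega⟩
              rw [hT, Nat.add_sub_cancel]
              exact haux T
            rw [haux2]
            have hfil : (Icc 1 B).filter (fun s => s + 1 ≤ t) = Icc 1 (t-1) := by
              ext a
              simp only [Finset.mem_filter, mem_Icc]
              omega
            rw [← hfil, Finset.sum_filter]
          -- cumulative arrivals
          have hCc : ∑ t' ∈ Icc 1 t, c u t' =
              ∑ v : S, ∑ s ∈ Icc 1 B,
                (if σf s u ≤ (t : WithTop ℕ) then c v s * p v u else 0) := by
            have h1 : ∑ t' ∈ Icc 1 t, c u t' =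
                ∑ t' ∈ Icc 1 t, ∑ v : S, ∑ s ∈ Icc 1 B,
                  (if σf s u = (t' : WithTop ℕ) then c v s * p v u else 0) :=
              Finset.sum_congr rfl fun t' _ => hrec u t' hlay
            rw [h1, Finset.sum_comm]
            refine Finset.sum_congr rfl fun v _ => ?_
            rw [Finset.sum_comm]
            refine Finset.sum_congr rfl fun s hs => ?_
            rcases hσc : σf s u with _ | m
            · show (∑ t' ∈ Icc 1 t, if (⊤ : WithTop ℕ) = (t' : WithTop ℕ)
                    then c v s * p v u else 0)
                  = if (⊤ : WithTop ℕ) ≤ (t : WithTop ℕ) then c v s * p v u else 0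
              have hL : ∀ t' ∈ Icc 1 t, (if (⊤ : WithTop ℕ) = (t' : WithTop ℕ)
                  then c v s * p v u else 0) = 0 := by
                intro t' _
                rw [if_neg]
                intro hcon
                exact (WithTop.coe_ne_top (a := (t' : ℕ))) hcon.symm
              rw [Finset.sum_congr rfl hL, Finset.sum_const_zero, if_neg (by simp)]
            · show (∑ t' ∈ Icc 1 t, if ((m : ℕ) : WithTop ℕ) = (t' : WithTop ℕ)
                    then c v s * p v u else 0)
                  = if ((m : ℕ) : WithTop ℕ) ≤ (t : WithTop ℕ) then c v s * p v u else 0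
              have hσc' : σf s u = ((m : ℕ) : WithTop ℕ) := hσc
              have hm := hσ_mem s u m hσc'
              have hL : ∀ t' ∈ Icc 1 t, (if ((m : ℕ) : WithTop ℕ) = (t' : WithTop ℕ)
                  then c v s * p v u else 0) = (if t' = m then c v s * p v u else 0) := by
                intro t' _
                refine if_congr ?_ rfl rfl
                constructor
                · intro h; exact_mod_cast h.symm
                · rintro rfl; rfl
              rw [Finset.sum_congr rfl hL, Finset.sum_ite_eq' (Icc 1 t) m]
              have hiff : (m ∈ Icc 1 t) ↔ (((m : ℕ) : WithTop ℕ) ≤ (t : WithTop ℕ)) := by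
                rw [mem_Icc]
                constructor
                · intro h; exact_mod_cast h.2
                · intro h
                  have h' : m ≤ t := by exact_mod_cast h
                  have h1 : 1 ≤ m := by
                    have := hm.1.1
                    omega
                  exact ⟨h1, h'⟩
              by_cases hmt : m ∈ Icc 1 t
              · rw [if_pos hmt, if_pos (hiff.mp hmt)]
              · rw [if_neg hmt, if_neg (fun h => hmt (hiff.mpr h))]
          rw [hDd, hCc, ← mul_sub, ← Finset.sum_sub_distrib]
          -- pointwise transit form
          have htrans : ∀ v : S, (∑ s ∈ Icc 1 B, (if s + 1 ≤ t then c v s * p v u else 0))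
              - (∑ s ∈ Icc 1 B, (if σf s u ≤ (t : WithTop ℕ) then c v s * p v u else 0))
              = ∑ s ∈ Icc 1 B, (if s + 1 ≤ t ∧ (t : WithTop ℕ) < σf s u
                  then c v s * p v u else 0) := by
            intro v
            rw [← Finset.sum_sub_distrib]
            refine Finset.sum_congr rfl fun s _ => ?_
            by_cases hle : σf s u ≤ (t : WithTop ℕ)
            · have hst : s + 1 ≤ t := by
                obtain ⟨m, hm, hmt⟩ := WithTop.le_coe_iff.mp hle
                have h1 := (hσ_mem s u m hm).1.1
                have h2 : m ≤ t := by exact_mod_cast hmt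
                omega
              rw [if_pos hst, if_pos hle, if_neg (fun h => absurd hle (not_le.mpr h.2))]
              ring
            · rw [if_neg hle]
              have hlt : (t : WithTop ℕ) < σf s u := not_le.mp hle
              by_cases hst : s + 1 ≤ t
              · rw [if_pos hst, if_pos ⟨hst, hlt⟩, sub_zero]
              · rw [if_neg hst, if_neg (fun h => hst h.1), sub_zero]
          rw [Finset.sum_congr rfl (fun v _ => htrans v)]
          -- bound ε · c by z termwise
          have hbd : ε * (∑ v : S, ∑ s ∈ Icc 1 B, (if s + 1 ≤ t ∧ (t : WithTop ℕ) < σf s u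
                then c v s * p v u else 0))
              ≤ ∑ s ∈ Icc 1 B, (if s + 1 ≤ t ∧ (t : WithTop ℕ) < σf s u
                then w u (s+1) else 0) := by
            rw [Finset.mul_sum]
            have h1 : ∀ v : S, ε * (∑ s ∈ Icc 1 B, (if s + 1 ≤ t ∧ (t : WithTop ℕ) < σf s u
                  then c v s * p v u else 0))
                ≤ ∑ s ∈ Icc 1 B, (if s + 1 ≤ t ∧ (t : WithTop ℕ) < σf s u
                  then z v s * p v u else 0) := by
              intro v
              rw [Finset.mul_sum]
              refine Finset.sum_le_sum fun s _ => ?_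
              split
              · calc ε * (c v s * p v u) = (ε * c v s) * p v u := by ring
                  _ ≤ z v s * p v u := mul_le_mul_of_nonneg_right (hεle v s) (hp v u).1
              · rw [mul_zero]
            calc ∑ v : S, ε * (∑ s ∈ Icc 1 B, (if s + 1 ≤ t ∧ (t : WithTop ℕ) < σf s u
                  then c v s * p v u else 0))
                ≤ ∑ v : S, ∑ s ∈ Icc 1 B, (if s + 1 ≤ t ∧ (t : WithTop ℕ) < σf s u
                  then z v s * p v u else 0) := Finset.sum_le_sum fun v _ => h1 v
              _ = ∑ s ∈ Icc 1 B, ∑ v : S, (if s + 1 ≤ t ∧ (t : WithTop ℕ) < σf s u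
                  then z v s * p v u else 0) := Finset.sum_comm
              _ = ∑ s ∈ Icc 1 B, (if s + 1 ≤ t ∧ (t : WithTop ℕ) < σf s u
                  then w u (s+1) else 0) := by
                  refine Finset.sum_congr rfl fun s hs => ?_
                  by_cases hcond : s + 1 ≤ t ∧ (t : WithTop ℕ) < σf s u
                  · rw [if_pos hcond]
                    have hs1 := (mem_Icc.mp hs).1
                    have hmem : s + 1 ∈ Icc 2 B := by
                      rw [mem_Icc]
                      omega
                    rw [Finset.sum_congr rfl (fun v _ => by rw [if_pos hcond]),
                      (hC1 u hu).2 (s+1) hmem, Nat.add_sub_cancel]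
                  · rw [if_neg hcond,
                      Finset.sum_congr rfl (fun v _ => by rw [if_neg hcond]),
                      Finset.sum_const_zero]
          refine le_trans hbd ?_
          -- the waiting bound
          set A : Finset ℕ :=
            (Icc 1 B).filter (fun s => s + 1 ≤ t ∧ (t : WithTop ℕ) < σf s u) with hAdef
          rw [← Finset.sum_filter, ← hAdef]
          rcases A.eq_empty_or_nonempty with hA | hA
          · rw [hA, Finset.sum_empty]
            have := hC2 u t htm
            linarith
          · set s₀ : ℕ := A.min' hA with hs₀def
            have hs₀A : s₀ ∈ A := Finset.min'_mem A hA
            have hs₀p : s₀ ∈ Icc 1 B ∧ s₀ + 1 ≤ t ∧ (t : WithTop ℕ) < σf s₀ u := by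
              have := hs₀A
              rw [hAdef, Finset.mem_filter] at this
              exact ⟨this.1, this.2.1, this.2.2⟩
            have hz0r : ∀ r ∈ Icc (s₀+1) t, z u r = 0 := by
              intro r hr
              rw [mem_Icc] at hr
              by_contra hzr
              have hzr' : 0 < z u r := lt_of_le_of_ne (hznn u r) (Ne.symm hzr)
              have hle := hσ_le s₀ u r hr.1 (le_trans hr.2 htB) hzr'
              have hrt : (r : WithTop ℕ) ≤ (t : WithTop ℕ) := by
                exact_mod_cast hr.2
              exact absurd (le_trans hle hrt) (not_le.mpr hs₀p.2.2)
            have himg : ∑ s ∈ A, w u (s+1) = ∑ r ∈ A.image (fun s => s + 1), w u r := by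
              rw [Finset.sum_image (fun a _ b _ h => by omega)]
            have hsub : A.image (fun s => s + 1) ⊆ Icc (s₀+1) t := by
              intro r hr
              rw [Finset.mem_image] at hr
              obtain ⟨s, hsA, rfl⟩ := hr
              have hmin := Finset.min'_le A s hsA
              have hs' := hsA
              rw [hAdef, Finset.mem_filter] at hs'
              rw [mem_Icc]
              exact ⟨by omega, hs'.2.1⟩
            have hstep : ∑ s ∈ A, w u (s+1) ≤ ∑ r ∈ Icc (s₀+1) t, w u r := by
              rw [himg]
              exact Finset.sum_le_sum_of_subset_of_nonneg hsub
                (fun r _ _ => hwnn u r)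
            have hun : Icc 1 s₀ ∪ Icc (s₀+1) t = Icc 1 t := by
              ext a
              simp only [Finset.mem_union, mem_Icc]
              have := hs₀p.2.1
              omega
            have hdisj : Disjoint (Icc 1 s₀) (Icc (s₀+1) t) := by
              rw [Finset.disjoint_left]
              intro a ha1 ha2
              rw [mem_Icc] at ha1 ha2
              omega
            have hwsplit : ∑ r ∈ Icc 1 t, w u r
                = ∑ r ∈ Icc 1 s₀, w u r + ∑ r ∈ Icc (s₀+1) t, w u r := by
              rw [← hun, Finset.sum_union hdisj]
            have hzsplit : ∑ r ∈ Icc 1 t, z u r = ∑ r ∈ Icc 1 s₀, z u r := by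
              rw [← hun, Finset.sum_union hdisj, Finset.sum_eq_zero hz0r, add_zero]
            have hc2s : ∑ r ∈ Icc 1 s₀, z u r ≤ ∑ r ∈ Icc 1 s₀, w u r :=
              hC2 u s₀ hs₀p.1
            calc ∑ s ∈ A, w u (s+1) ≤ ∑ r ∈ Icc (s₀+1) t, w u r := hstep
              _ = ∑ r ∈ Icc 1 t, w u r - ∑ r ∈ Icc 1 s₀, w u r := by
                  rw [hwsplit]; ring
              _ ≤ ∑ r ∈ Icc 1 t, w u r - ∑ r ∈ Icc 1 s₀, z u r := by linarith
              _ = ∑ r ∈ Icc 1 t, w u r - ∑ r ∈ Icc 1 t, z u r := by rw [hzsplit]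
        linarith
    · -- other arms: nothing changed
      have hzz : ∀ s, z' u s = z u s := fun s => hz'other u s ha
      have hww : ∀ s, w' u s = w u s := fun s => hw'other u s ha
      rw [Finset.sum_congr rfl (fun s _ => hzz s), Finset.sum_congr rfl (fun s _ => hww s)]
      exact hC2 u t htm
  -- assemble everything
  refine ⟨prob, R, z', w', ⟨?_, ?_, ?_, ?_⟩, hz'nn, hw'nn, hz'le, hC1', hC2', ?_, ?_, ?_, ?_⟩
  · -- prob nonneg
    intro u T _
    induction T using WithTop.recTopCoe with
    | top => exact le_rfl
    | coe t => exact mul_nonneg hεpos.le (hcnn u t)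
  · -- prob at ⊤
    intro u _
    rfl
  · -- (D1)
    intro v u _ _ t _
    refine ⟨σf t u, ⟨⟨t, rfl, rfl⟩, ?_⟩, ?_⟩
    · rcases hσc : σf t u with _ | m
      · exact le_top
      · have hdef : σf t u = ((m : ℕ) : WithTop ℕ) := hσc
        have hm := (hσ_mem t u m hdef).1.1
        show ((t : WithTop ℕ) + 1) ≤ ((m : ℕ) : WithTop ℕ)
        have hcast : ((t : WithTop ℕ) + 1) = ((t + 1 : ℕ) : WithTop ℕ) := by push_cast; ring
        rw [hcast]
        exact_mod_cast hm
    · rintro y ⟨⟨sN, hsN, hy⟩, -⟩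
      have hsN' : sN = t := by exact_mod_cast hsN.symm
      subst hsN'
      exact hy
  · -- (D2)
    intro u ha hne t _
    have hu : u ≠ ρ (arm u) := by rw [ha]; exact hne
    have hlay : layer u ≠ 0 := hlaypos u hu
    rw [hprobcoe u t, hrec u t hlay, Finset.mul_sum]
    refine Finset.sum_congr rfl fun v _ => ?_
    rw [Finset.mul_sum]
    refine Finset.sum_congr rfl fun s _ => ?_
    by_cases hcond : σf s u = (t : WithTop ℕ)
    · have hR : R v (s : WithTop ℕ) u (t : WithTop ℕ) := ⟨s, rfl, hcond.symm⟩
      rw [if_pos hcond, if_pos hR, hprobcoe v s]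
      ring
    · have hR : ¬ R v (s : WithTop ℕ) u (t : WithTop ℕ) := by
        rintro ⟨sN, hsN, hty⟩
        have hsN' : sN = s := by exact_mod_cast hsN.symm
        subst hsN'
        exact hcond hty.symm
      rw [if_neg hcond, if_neg hR, mul_zero]
  · -- (C3')
    intro t htm
    have h1 : ∑ u : S, z' u t ≤ ∑ u : S, z u t :=
      Finset.sum_le_sum fun u _ => hz'le u t
    exact le_trans h1 (hC3 t htm)
  · -- peeled amount
    intro u _ t _
    show z u t - (z u t - ε * c u t) = ε * c u t
    ring
  · -- other arms unchanged
    intro u t ha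
    exact ⟨hz'other u t ha, hw'other u t ha⟩
  · -- a new zero coordinate
    have hmem : ε ∈ Finset.image (fun q : S × ℕ => z q.1 q.2 / c q.1 q.2) F :=
      Finset.min'_mem G hGne
    obtain ⟨q, hqF, hq⟩ := Finset.mem_image.mp hmem
    rw [hFmem] at hqF
    have hc := hqF.2
    have hzq := (hcsupp q.1 q.2 (ne_of_gt hc)).2.2
    have harmq := (hcsupp q.1 q.2 (ne_of_gt hc)).1
    refine ⟨q.1, q.2, harmq, ?_, hzq⟩
    show z q.1 q.2 - ε * c q.1 q.2 = 0
    have hεq : ε = z q.1 q.2 / c q.1 q.2 := hq.symm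
    rw [hεq, div_mul_cancel₀ _ (ne_of_gt hc), sub_self]
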